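/- Let I : H⁰¹(Ω) → ℝ, I(u) = (1/2)‖∇u‖² − ∫_Ω F(x,u) dx, where F is a Carathéodory primitive satisfying |F(x,t)| ≤ C t² and lim_{|t|→∞} 2F(x,t)/t² = η(x) uniformly, with λ₁(η) > 1 (i.e., ∫ η u² ≤ (1/λ₁(η))‖∇u‖² for all u). Then I is coercive: I(u_n) → ∞ along any sequence with ‖∇u_n‖ → ∞. -/

import Mathlib

open Set MeasureTheory Filter Topology

/- Coercivity of the energy functional `I(u) = (1/2)‖∇u‖² − ∫_Ω F(x,u)`.
`g n` stands for `‖∇u_n‖`; the weighted Poincaré inequality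
`∫ η u² ≤ (1/λ₁(η))‖∇u‖²` (with `λ₁(η) > 1`) and the plain Poincaré
inequality `∫ u² ≤ C₀‖∇u‖²` are given as hypotheses. -/
theorem stmt17 (N : ℕ) (Ω : Set (EuclideanSpace ℝ (Fin N))) (hΩm : MeasurableSet Ω)
    (hΩfin : volume Ω ≠ ⊤)
    (F : EuclideanSpace ℝ (Fin N) → ℝ → ℝ) (η : EuclideanSpace ℝ (Fin N) → ℝ)
    (C : ℝ) (hC : 0 < C)
    (hFbd : ∀ x ∈ Ω, ∀ t : ℝ, |F x t| ≤ C * t ^ 2)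
    (hFlim : ∀ ε > (0:ℝ), ∃ R : ℝ, ∀ x ∈ Ω, ∀ t : ℝ, R ≤ |t| →
      |2 * F x t / t ^ 2 - η x| < ε)
    (lam : ℝ) (hlam : 1 < lam)
    (u : ℕ → EuclideanSpace ℝ (Fin N) → ℝ) (g : ℕ → ℝ) (hg : ∀ n, 0 ≤ g n)
    (hmeas : ∀ n, Measurable (u n))
    (hintF : ∀ n, IntegrableOn (fun x => F x (u n x)) Ω volume)
    (hint2 : ∀ n, IntegrableOn (fun x => u n x ^ 2) Ω volume)
    (hintη : ∀ n, IntegrableOn (fun x => η x * u n x ^ 2) Ω volume)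
    -- weighted Poincaré inequality with first eigenvalue lam = λ₁(η) > 1
    (hwp : ∀ n, ∫ x in Ω, η x * u n x ^ 2 ≤ (1 / lam) * g n ^ 2)
    -- plain Poincaré inequality
    (C0 : ℝ) (hC0 : 0 < C0) (hp : ∀ n, ∫ x in Ω, u n x ^ 2 ≤ C0 * g n ^ 2)
    (hgg : Tendsto g atTop atTop) :
    Tendsto (fun n => (1/2) * g n ^ 2 - ∫ x in Ω, F x (u n x)) atTop atTop := by
  have hlam0 : (0:ℝ) < lam := by linarith
  -- bound on η
  have hηbd : ∀ x ∈ Ω, |η x| ≤ 2 * C := by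
    intro x hx
    refine le_of_forall_pos_le_add ?_
    intro ε hε
    obtain ⟨R, hR⟩ := hFlim ε hε
    set t : ℝ := max R 1 with ht
    have ht1 : (1:ℝ) ≤ t := le_max_right _ _
    have ht0 : (0:ℝ) < t := by linarith
    have habs : R ≤ |t| := by rw [abs_of_pos ht0]; exact le_max_left _ _
    have h1 := hR x hx t habs
    have h2 := hFbd x hx t
    have ht2 : (0:ℝ) < t ^ 2 := by positivity
    have hq : |2 * F x t / t ^ 2| ≤ 2 * C := by
      rw [abs_div, abs_of_pos ht2, div_le_iff₀ ht2, abs_mul, abs_two]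
      nlinarith [abs_nonneg (F x t)]
    have tri : |η x - 0| ≤ |η x - 2 * F x t / t ^ 2| + |2 * F x t / t ^ 2 - 0| :=
      abs_sub_le _ _ _
    rw [sub_zero, sub_zero] at tri
    rw [abs_sub_comm] at h1
    linarith
  -- choose ε and R
  have hl1 : 1 / lam < 1 := by rw [div_lt_one hlam0]; exact hlam
  set ε : ℝ := (1 - 1 / lam) / (2 * C0) with hε
  have hεpos : 0 < ε := by
    apply div_pos; linarith; linarith
  obtain ⟨R, hR⟩ := hFlim ε hεpos
  set R' : ℝ := max R 1 with hR'
  set M : ℝ := 4 * C * R' ^ 2 with hM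
  have hR'1 : (1:ℝ) ≤ R' := le_max_right _ _
  have hMpos : 0 < M := by positivity
  -- pointwise bound
  have hpt : ∀ x ∈ Ω, ∀ t : ℝ, F x t ≤ 1/2 * (η x * t ^ 2) + ε/2 * t ^ 2 + M/2 := by
    intro x hx t
    rcases le_or_gt R' |t| with hcase | hcase
    · have ht0 : t ≠ 0 := by
        intro h; rw [h, abs_zero] at hcase; linarith
      have h1 := hR x hx t (le_trans (le_max_left _ _) hcase)
      set a : ℝ := 2 * F x t / t ^ 2 - η x with ha
      have ht2 : t ^ 2 ≠ 0 := pow_ne_zero _ ht0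
      have hkey : 2 * F x t = (a + η x) * t ^ 2 := by
        rw [ha]; field_simp; ring
      have haε := abs_le.mp h1.le
      nlinarith [sq_nonneg t, hMpos]
    · have h2 := hFbd x hx t
      have h3 := hηbd x hx
      have h4 := abs_le.mp h3
      have h5 := abs_le.mp h2
      have ht2 : t ^ 2 ≤ R' ^ 2 := by
        have := abs_nonneg t
        nlinarith [sq_abs t]
      nlinarith [sq_nonneg t, hεpos.le]
  -- integral bound
  set K : ℝ := M/2 * (volume Ω).toReal with hK
  have hInt : ∀ n, ∫ x in Ω, F x (u n x) ≤
      1/2 * (∫ x in Ω, η x * u n x ^ 2) + ε/2 * (∫ x in Ω, u n x ^ 2) + K := by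
    intro n
    have hconst : IntegrableOn (fun _ : EuclideanSpace ℝ (Fin N) => M/2) Ω volume := by
      exact integrableOn_const hΩfin
    have hrhs : IntegrableOn
        (fun x => 1/2 * (η x * u n x ^ 2) + ε/2 * u n x ^ 2 + M/2) Ω volume :=
      (((hintη n).const_mul _).add ((hint2 n).const_mul _)).add hconst
    have hmono : ∫ x in Ω, F x (u n x) ≤
        ∫ x in Ω, (1/2 * (η x * u n x ^ 2) + ε/2 * u n x ^ 2 + M/2) := by
      refine setIntegral_mono_on (hintF n) hrhs hΩm ?_
      intro x hx
      exact hpt x hx (u n x)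
    have heq : ∫ x in Ω, (1/2 * (η x * u n x ^ 2) + ε/2 * u n x ^ 2 + M/2) =
        1/2 * (∫ x in Ω, η x * u n x ^ 2) + ε/2 * (∫ x in Ω, u n x ^ 2) + K := by
      have e1 : ∫ x in Ω, (1/2 * (η x * u n x ^ 2) + ε/2 * u n x ^ 2 + M/2) =
          (∫ x in Ω, (1/2 * (η x * u n x ^ 2) + ε/2 * u n x ^ 2)) +
            ∫ _x in Ω, (M/2 : ℝ) :=
        integral_add (((hintη n).const_mul _).add ((hint2 n).const_mul _)) hconst
      have e2 : ∫ x in Ω, (1/2 * (η x * u n x ^ 2) + ε/2 * u n x ^ 2) =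
          (∫ x in Ω, 1/2 * (η x * u n x ^ 2)) + ∫ x in Ω, ε/2 * u n x ^ 2 :=
        integral_add ((hintη n).const_mul _) ((hint2 n).const_mul _)
      rw [e1, e2, integral_const_mul, integral_const_mul, setIntegral_const, measureReal_def, hK,
        smul_eq_mul]
      ring
    rw [heq] at hmono
    exact hmono
  -- final lower bound
  set c : ℝ := (1 - 1/lam)/4 with hc
  have hcpos : 0 < c := by rw [hc]; linarith
  have hlow : ∀ n, c * g n ^ 2 - K ≤ (1/2) * g n ^ 2 - ∫ x in Ω, F x (u n x) := by
    intro n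
    have h1 := hInt n
    have h2 := hwp n
    have h3 := hp n
    have hε2 : ε/2 * ∫ x in Ω, u n x ^ 2 ≤ ε/2 * (C0 * g n ^ 2) := by
      apply mul_le_mul_of_nonneg_left h3 (by linarith)
    have hεc : ε/2 * (C0 * g n ^ 2) = (1 - 1/lam)/4 * g n ^ 2 := by
      rw [hε]; field_simp; ring
    nlinarith
  refine tendsto_atTop_mono hlow ?_
  have hsq : Tendsto (fun n => g n ^ 2) atTop atTop := (tendsto_pow_atTop two_ne_zero).comp hgg
  have := (tendsto_const_mul_atTop_of_pos hcpos).mpr hsq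
  exact this.atTop_add tendsto_const_nhds
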